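/- arXiv:1801.03807 — 4 statements merged into one kernel-verified Lean document; each statement's English description precedes it below -/
import Mathlib

section
/- On the subspace A_z^0, the operators satisfy ∂_{z,0} + ∂_{z,1} + ∂_{1,0} = 0. -/
open scoped BigOperators

/-- Letters: `0 ↦ e₀`, `1 ↦ e₁`, `2 ↦ e_z`. -/
abbrev Letter := Fin 3

/-- The free noncommutative ring `𝒜_z = ℤ⟨e₀, e₁, e_z⟩`. -/
abbrev Az := MonoidAlgebra ℤ (FreeMonoid Letter)

/-- The monomial (word) corresponding to a list of letters. -/
noncomputable def wordOf (l : List Letter) : Az :=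
  MonoidAlgebra.single (FreeMonoid.ofList l) 1

/-- The extended sequence `a₀ = 0, a₁, …, a_n, a_{n+1} = 1`. -/
def ext (a : List Letter) (j : ℕ) : Letter :=
  ((0 : Letter) :: a ++ [1]).getD j 1

/-- `∂_{α,β}` on a word. -/
noncomputable def Dword (α β : Letter) (a : List Letter) : Az :=
  ∑ i ∈ Finset.range a.length,
    (((if ({ext a (i + 1), ext a (i + 2)} : Finset Letter) = {α, β} then 1 else 0)
      - (if ({ext a i, ext a (i + 1)} : Finset Letter) = {α, β} then 1 else 0) : ℤ))
      • wordOf (a.eraseIdx i)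

/-- The linear operator `∂_{α,β} : 𝒜_z → 𝒜_z`. -/
noncomputable def del (α β : Letter) : Az →ₗ[ℤ] Az :=
  (Finsupp.lsum ℤ fun w => LinearMap.toSpanSingleton ℤ Az (Dword α β (FreeMonoid.toList w))) ∘ₗ (MonoidAlgebra.coeffLinearEquiv ℤ).toLinearMap

/-- The shuffle product of two words. -/
noncomputable def shuffleWord : List Letter → List Letter → Az
  | [], v => wordOf v
  | u, [] => wordOf u
  | a :: u, b :: v =>
      wordOf [a] * shuffleWord u (b :: v) + wordOf [b] * shuffleWord (a :: u) v
termination_by u v => u.length + v.length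

/-- The shuffle product as a bilinear map on `𝒜_z`. -/
noncomputable def sh : Az →ₗ[ℤ] Az →ₗ[ℤ] Az :=
  (Finsupp.lsum ℤ fun u => LinearMap.toSpanSingleton ℤ (Az →ₗ[ℤ] Az)
    ((Finsupp.lsum ℤ fun v =>
      LinearMap.toSpanSingleton ℤ Az (shuffleWord (FreeMonoid.toList u) (FreeMonoid.toList v))) ∘ₗ (MonoidAlgebra.coeffLinearEquiv ℤ).toLinearMap)) ∘ₗ (MonoidAlgebra.coeffLinearEquiv ℤ).toLinearMap

/-- The (generalized) stuffle product of two words (the left word should lie in `𝒜`). -/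
noncomputable def stWord : List Letter → List Letter → Az
  | [], v => wordOf v
  | u, [] => wordOf u
  | a :: u, b :: v =>
      if a = 0 then wordOf [0] * stWord u (b :: v)
      else if a = 1 then
        wordOf [b] * (stWord u (b :: v) + stWord (a :: u) v - wordOf [0] * stWord u v)
      else 0
termination_by u v => u.length + v.length

/-- The stuffle product as a bilinear map. -/
noncomputable def st : Az →ₗ[ℤ] Az →ₗ[ℤ] Az :=
  (Finsupp.lsum ℤ fun u => LinearMap.toSpanSingleton ℤ (Az →ₗ[ℤ] Az)
    ((Finsupp.lsum ℤ fun v =>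
      LinearMap.toSpanSingleton ℤ Az (stWord (FreeMonoid.toList u) (FreeMonoid.toList v))) ∘ₗ (MonoidAlgebra.coeffLinearEquiv ℤ).toLinearMap)) ∘ₗ (MonoidAlgebra.coeffLinearEquiv ℤ).toLinearMap

/-- `Const` kills every word containing the letter `e_z`. -/
noncomputable def Const : Az →ₗ[ℤ] Az :=
  (Finsupp.lsum ℤ fun w => LinearMap.toSpanSingleton ℤ Az
    (if (2 : Letter) ∈ FreeMonoid.toList w then 0 else wordOf (FreeMonoid.toList w))) ∘ₗ (MonoidAlgebra.coeffLinearEquiv ℤ).toLinearMap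

/-- `τ_z` on letters. -/
noncomputable def tauLetter (a : Letter) : Az :=
  if a = 0 then wordOf [2] - wordOf [1]
  else if a = 1 then wordOf [2] - wordOf [0]
  else wordOf [2]

/-- `τ_z` on a word (reversing the word). -/
noncomputable def tauWord : List Letter → Az
  | [] => 1
  | a :: u => tauWord u * tauLetter a

/-- The duality anti-automorphism `τ_z`. -/
noncomputable def tau : Az →ₗ[ℤ] Az :=
  (Finsupp.lsum ℤ fun w => LinearMap.toSpanSingleton ℤ Az (tauWord (FreeMonoid.toList w))) ∘ₗ (MonoidAlgebra.coeffLinearEquiv ℤ).toLinearMap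

/-- `𝒜_z^0`: span of the empty word and of words beginning with `e₁` or `e_z`
and ending in `e₀` or `e_z`. -/
noncomputable def Az0 : Submodule ℤ Az :=
  Submodule.span ℤ {x | ∃ l : List Letter,
    (l = [] ∨ (l.head? ≠ some 0 ∧ l.getLast? ≠ some 1)) ∧ x = wordOf l}

/-- `𝒜_z^1`: span of the empty word and of words beginning with `e₁` or `e_z`. -/
noncomputable def Az1 : Submodule ℤ Az :=
  Submodule.span ℤ {x | ∃ l : List Letter, l.head? ≠ some 0 ∧ x = wordOf l}

/-- `𝒜 = ℤ⟨e₀, e₁⟩` inside `𝒜_z`. -/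
noncomputable def Asub : Submodule ℤ Az :=
  Submodule.span ℤ {x | ∃ l : List Letter, (2 : Letter) ∉ l ∧ x = wordOf l}

/-- `𝒜^1 = ℤ ⊕ e₁𝒜`. -/
noncomputable def A1sub : Submodule ℤ Az :=
  Submodule.span ℤ {x | ∃ l : List Letter,
    ((2 : Letter) ∉ l ∧ l.head? ≠ some 0 ∧ l.head? ≠ some 2) ∧ x = wordOf l}

/-- `𝒜^0 = ℤ ⊕ e₁𝒜e₀`. -/
noncomputable def A0sub : Submodule ℤ Az :=
  Submodule.span ℤ {x | ∃ l : List Letter,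
    ((2 : Letter) ∉ l ∧ (l = [] ∨ (l.head? = some 1 ∧ l.getLast? = some 0))) ∧ x = wordOf l}

/-- `𝒜_z^{-2} = ℤ ⊕ e₁𝒜_z e₀ ⊕ e_z 𝒜_z e₀`. -/
noncomputable def Azm2 : Submodule ℤ Az :=
  Submodule.span ℤ {x | ∃ l : List Letter,
    (l = [] ∨ (l.head? ≠ some 0 ∧ l.getLast? = some 0)) ∧ x = wordOf l}

/-- `𝒜_z^0 ∩ ℤ⟨e₁, e_z⟩`. -/
noncomputable def Wsub : Submodule ℤ Az :=
  Submodule.span ℤ {x | ∃ l : List Letter,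
    ((0 : Letter) ∉ l ∧ (l = [] ∨ l.getLast? = some 2)) ∧ x = wordOf l}

/-- `ℤ⟨e_z⟩`: span of powers of `e_z`. -/
noncomputable def Zez : Submodule ℤ Az :=
  Submodule.span ℤ {x | ∃ k : ℕ, x = wordOf (List.replicate k 2)}

/-- `𝒜_z^{-1} = 𝒜_z^{-2}·ℤ⟨e_z⟩`. -/
noncomputable def Azm1 : Submodule ℤ Az :=
  Submodule.span ℤ {x | ∃ l : List Letter, ∃ k : ℕ,
    (l = [] ∨ (l.head? ≠ some 0 ∧ l.getLast? = some 0)) ∧ x = wordOf (l ++ List.replicate k 2)}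

/-- `ℤ⟨e₀, e_z⟩ ∩ 𝒜_z^0`. -/
noncomputable def Vsub : Submodule ℤ Az :=
  Submodule.span ℤ {x | ∃ l : List Letter,
    ((1 : Letter) ∉ l ∧ (l = [] ∨ l.head? = some 2)) ∧ x = wordOf l}

/-- All lists of length `r` with entries in `{e₀, e_z}`. -/
def tuples : ℕ → List (List Letter)
  | 0 => [[]]
  | n + 1 => (tuples n).flatMap fun t => [(0 : Letter) :: t, (2 : Letter) :: t]

/-- `∂_{1,b₁} ∘ ⋯ ∘ ∂_{1,b_r}` for `bs = [b₁, …, b_r]`. -/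
noncomputable def delChain : List Letter → Az →ₗ[ℤ] Az
  | [] => LinearMap.id
  | b :: bs => (del 1 b).comp (delChain bs)

/-- `∂_{z,α₁} ∘ ⋯ ∘ ∂_{z,α_r}` for `as = [α₁, …, α_r]`. -/
noncomputable def delZChain : List Letter → Az →ₗ[ℤ] Az
  | [] => LinearMap.id
  | a :: as => (del 2 a).comp (delZChain as)

/-- `φ_⧢` on a word. -/
noncomputable def phiShWord (l : List Letter) : Az :=
  ∑ r ∈ Finset.range (l.length + 1),
    ((tuples r).map fun b => sh (Const (delChain b (wordOf l))) (wordOf b)).sum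

/-- `φ_⧢ : 𝒜_z^0 → 𝒜_z^0` (defined on all of `𝒜_z`). -/
noncomputable def phiSh : Az →ₗ[ℤ] Az :=
  (Finsupp.lsum ℤ fun w => LinearMap.toSpanSingleton ℤ Az (phiShWord (FreeMonoid.toList w))) ∘ₗ (MonoidAlgebra.coeffLinearEquiv ℤ).toLinearMap

/-- `φ_*` on a word. -/
noncomputable def phiStWord (l : List Letter) : Az :=
  ∑ r ∈ Finset.range (l.length + 1),
    ((tuples r).map fun b => st (Const (delChain b (wordOf l))) (wordOf b)).sum

/-- `φ_* : 𝒜_z^0 → 𝒜_z^0` (defined on all of `𝒜_z`). -/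
noncomputable def phiSt : Az →ₗ[ℤ] Az :=
  (Finsupp.lsum ℤ fun w => LinearMap.toSpanSingleton ℤ Az (phiStWord (FreeMonoid.toList w))) ∘ₗ (MonoidAlgebra.coeffLinearEquiv ℤ).toLinearMap

/-- `φ_⊗` on a word. -/
noncomputable def phiTWord (l : List Letter) : TensorProduct ℤ Az Az :=
  ∑ r ∈ Finset.range (l.length + 1),
    ((tuples r).map fun b => (Const (delChain b (wordOf l))) ⊗ₜ[ℤ] (wordOf b)).sum

/-- `φ_⊗ : 𝒜_z^0 → 𝒜^0 ⊗ ℤ⟨e₀, e_z⟩` (defined on all of `𝒜_z`). -/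
noncomputable def phiT : Az →ₗ[ℤ] TensorProduct ℤ Az Az :=
  (Finsupp.lsum ℤ fun w => LinearMap.toSpanSingleton ℤ (TensorProduct ℤ Az Az)
    (phiTWord (FreeMonoid.toList w))) ∘ₗ (MonoidAlgebra.coeffLinearEquiv ℤ).toLinearMap

/-- The `i`-fold shuffle power of `e₁`. -/
noncomputable def e1pow : ℕ → Az
  | 0 => 1
  | n + 1 => sh (wordOf [1]) (e1pow n)

/-- Substitution `z → 1` on words. -/
noncomputable def subst1 : Az →ₗ[ℤ] Az :=
  (Finsupp.lsum ℤ fun w => LinearMap.toSpanSingleton ℤ Az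
    (wordOf ((FreeMonoid.toList w).map fun a => if a = 2 then 1 else a))) ∘ₗ (MonoidAlgebra.coeffLinearEquiv ℤ).toLinearMap

lemma del_wordOf (α β : Letter) (l : List Letter) :
    del α β (wordOf l) = Dword α β l := by
  have h : (MonoidAlgebra.coeffLinearEquiv ℤ (wordOf l) : FreeMonoid Letter →₀ ℤ) = Finsupp.single (FreeMonoid.ofList l) 1 := rfl
  rw [del, LinearMap.comp_apply, LinearEquiv.coe_coe, h]
  erw [Finsupp.lsum_single]
  simp

lemma ext_succ (l : List Letter) (j : ℕ) : ext l (j + 1) = l.getD j 1 := by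
  induction l generalizing j with
  | nil => cases j <;> simp [ext]
  | cons a t ih =>
    cases j with
    | zero => simp [ext]
    | succ k =>
      have := ih k
      simpa [ext, List.getD] using this

lemma erase_adj : ∀ (l : List Letter) (i : ℕ), i + 1 < l.length →
    l.getD i 1 = l.getD (i + 1) 1 → l.eraseIdx i = l.eraseIdx (i + 1)
  | [], i, h, _ => by simp at h
  | [a], i, h, _ => by simp at h
  | a :: b :: t, 0, _, he => by
      simp [List.getD] at he
      simp [List.eraseIdx, he]
  | a :: b :: t, (i+1), h, he => by
      have h' : i + 1 < (b :: t).length := by simpa using Nat.lt_of_succ_lt_succ h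
      have he' : (b :: t).getD i 1 = (b :: t).getD (i + 1) 1 := by
        simpa [List.getD] using he
      simp [List.eraseIdx, erase_adj (b :: t) i h' he']

lemma coeff_sum : ∀ x y : Letter,
    ((if ({x, y} : Finset Letter) = {2, 0} then (1 : ℤ) else 0) +
     (if ({x, y} : Finset Letter) = {2, 1} then 1 else 0) +
     (if ({x, y} : Finset Letter) = {1, 0} then 1 else 0))
    = 1 - (if x = y then 1 else 0) := by decide

lemma Dsum (l : List Letter) (h0 : l.head? ≠ some 0) (h1 : l.getLast? ≠ some 1) :
    Dword 2 0 l + Dword 2 1 l + Dword 1 0 l = 0 := by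
  classical
  set n := l.length with hn
  set F : ℕ → ℤ := fun j => if ext l j = ext l (j + 1) then 1 else 0 with hF
  set g : ℕ → Az := fun j => F j • wordOf (l.eraseIdx (j - 1)) with hg
  have hF0 : F 0 = 0 := by
    have h00 : ext l 0 = (0 : Letter) := rfl
    have hne : ext l 0 ≠ ext l 1 := by
      rw [h00, ext_succ]
      cases l with
      | nil => simp
      | cons a t =>
        have ha : a ≠ 0 := by simpa using h0
        simpa [List.getD] using fun hh => ha hh.symm
    simp only [hF]
    rw [if_neg hne]
  have hFn : F n = 0 := by
    cases l with
    | nil =>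
      rw [show n = 0 from hn]; exact hF0
    | cons a t =>
      have hlen : n = t.length + 1 := hn
      simp only [hF]
      rw [hlen]
      have hx : ext (a :: t) (t.length + 1 + 1) = 1 := by
        rw [ext_succ]
        apply List.getD_eq_default
        simp
      have hy : ext (a :: t) (t.length + 1) = (a :: t).getLast (by simp) := by
        rw [ext_succ, List.getLast_eq_getElem]
        rw [List.getD_eq_getElem _ _ (by simp)]
        simp
      have hlast : (a :: t).getLast (by simp) ≠ 1 := by
        intro hcon
        exact h1 (by rw [List.getLast?_eq_getLast (by simp), hcon])
      rw [hx, hy, if_neg hlast]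
  have key : ∀ i < n, F i • wordOf (l.eraseIdx i) = g i := by
    intro i hi
    rcases eq_or_ne (F i) 0 with h | h
    · simp [hg, h]
    · have hFi : ext l i = ext l (i + 1) := by
        by_contra hc; rw [hF] at h; simp [hc] at h
      cases i with
      | zero =>
        exfalso; apply h
        exact hF0
      | succ j =>
        have hgd : l.getD j 1 = l.getD (j + 1) 1 := by
          rw [ext_succ, ext_succ] at hFi; exact hFi
        have he : l.eraseIdx j = l.eraseIdx (j + 1) := erase_adj l j (by omega) hgd
        simp [hg, he]
  have main : Dword 2 0 l + Dword 2 1 l + Dword 1 0 l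
      = ∑ i ∈ Finset.range n, (g i - g (i + 1)) := by
    unfold Dword
    rw [← Finset.sum_add_distrib, ← Finset.sum_add_distrib]
    refine Finset.sum_congr rfl fun i hi => ?_
    rw [Finset.mem_range] at hi
    rw [← add_smul, ← add_smul]
    have hc : ((if ({ext l (i + 1), ext l (i + 2)} : Finset Letter) = {2, 0} then (1:ℤ) else 0)
          - (if ({ext l i, ext l (i + 1)} : Finset Letter) = {2, 0} then 1 else 0)
        + ((if ({ext l (i + 1), ext l (i + 2)} : Finset Letter) = {2, 1} then 1 else 0)
          - (if ({ext l i, ext l (i + 1)} : Finset Letter) = {2, 1} then 1 else 0))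
        + ((if ({ext l (i + 1), ext l (i + 2)} : Finset Letter) = {1, 0} then 1 else 0)
          - (if ({ext l i, ext l (i + 1)} : Finset Letter) = {1, 0} then 1 else 0)))
        = F i - F (i + 1) := by
      have c1 := coeff_sum (ext l (i + 1)) (ext l (i + 2))
      have c2 := coeff_sum (ext l i) (ext l (i + 1))
      rw [hF]
      ring_nf
      ring_nf at c1 c2
      omega
    rw [hc, sub_smul]
    have h2 : F (i + 1) • wordOf (l.eraseIdx i) = g (i + 1) := by simp [hg]
    rw [key i hi, h2]
  rw [main, Finset.sum_range_sub']
  have hgn : g n = 0 := by simp only [hg]; rw [hFn, zero_smul]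
  have hg0 : g 0 = 0 := by simp only [hg]; rw [hF0, zero_smul]
  rw [hgn, hg0, sub_zero]

/-- On `𝒜_z^0` we have `∂_{z,0} + ∂_{z,1} + ∂_{1,0} = 0`. -/
theorem stmt_1 (u : Az) (hu : u ∈ Az0) :
    del 2 0 u + del 2 1 u + del 1 0 u = 0 := by
  have hle : Az0 ≤ LinearMap.ker (del 2 0 + del 2 1 + del 1 0) := by
    rw [Az0, Submodule.span_le]
    rintro x ⟨l, hcond, rfl⟩
    simp only [SetLike.mem_coe, LinearMap.mem_ker, LinearMap.add_apply]
    rw [del_wordOf, del_wordOf, del_wordOf]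
    rcases hcond with rfl | ⟨ha, hb⟩
    · exact Dsum [] (by simp) (by simp)
    · exact Dsum l ha hb
  have := hle hu
  rw [LinearMap.mem_ker] at this
  simpa using this
end

section
/- For c ∈ {0,1}, the operator ∂_{z,c} is a derivation with respect to the shuffle product: for all u,v ∈ A_z, ∂_{z,c}(u ⧢ v) = (∂_{z,c} u) ⧢ v + u ⧢ (∂_{z,c} v). -/
open scoped BigOperators

section Aux

lemma wordOf_nil : wordOf [] = 1 := rfl
lemma wordOf_cons (a : Letter) (l : List Letter) : wordOf (a :: l) = wordOf [a] * wordOf l := by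
  simp [wordOf, MonoidAlgebra.single_mul_single]

def dd (α β x y : Letter) : ℤ := if ({x, y} : Finset Letter) = {α, β} then 1 else 0

lemma dd_comm (α β x y : Letter) : dd α β x y = dd α β y x := by
  simp [dd, Finset.pair_comm]

def extL (x : Letter) (a : List Letter) (j : ℕ) : Letter :=
  (x :: a ++ [1]).getD j 1

def hd1 (w : List Letter) : Letter := (w ++ [1]).getD 0 1

lemma hd1_nil : hd1 [] = 1 := rfl
lemma hd1_cons (h : Letter) (t : List Letter) : hd1 (h :: t) = h := rfl

noncomputable def DwordL (α β x : Letter) (a : List Letter) : Az :=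
  ∑ i ∈ Finset.range a.length,
    ((dd α β (extL x a (i + 1)) (extL x a (i + 2)) - dd α β (extL x a i) (extL x a (i + 1))))
      • wordOf (a.eraseIdx i)

lemma Dword_eq (α β : Letter) (a : List Letter) : Dword α β a = DwordL α β 0 a := rfl

lemma DwordL_nil (α β x : Letter) : DwordL α β x [] = 0 := by simp [DwordL]

lemma extL_succ (x a : Letter) (w : List Letter) (j : ℕ) :
    extL x (a :: w) (j + 1) = extL a w j := by
  simp [extL]

lemma extL_zero (x : Letter) (a : List Letter) : extL x a 0 = x := rfl

lemma extL_one (x a : Letter) (w : List Letter) : extL x (a :: w) 1 = a := rfl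

lemma extL_two (x a : Letter) (w : List Letter) : extL x (a :: w) 2 = hd1 w := by
  cases w <;> rfl

lemma DwordL_cons (α β x a : Letter) (w : List Letter) :
    DwordL α β x (a :: w)
      = (dd α β a (hd1 w) - dd α β x a) • wordOf w + wordOf [a] * DwordL α β a w := by
  unfold DwordL
  rw [List.length_cons, Finset.sum_range_succ', Finset.mul_sum]
  rw [add_comm]
  congr 1
  · apply Finset.sum_congr rfl
    intro i _
    rw [extL_succ, extL_succ, extL_succ, List.eraseIdx_cons_succ,
      wordOf_cons a (w.eraseIdx i), mul_smul_comm]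

noncomputable def PhiWord (α β a : Letter) : List Letter → Az
  | [] => (dd α β a 1 - dd α β 0 a) • (1 : Az)
  | h :: t => (dd α β a h - dd α β 0 a) • wordOf (h :: t) + (dd α β 0 h - dd α β a h) • wordOf (a :: t)

lemma Dword_cons (α β a : Letter) (w : List Letter) :
    Dword α β (a :: w) = wordOf [a] * Dword α β w + PhiWord α β a w := by
  rw [Dword_eq, Dword_eq, DwordL_cons]
  cases w with
  | nil => simp [DwordL_nil, PhiWord, wordOf_nil, hd1_nil]
  | cons h t =>
      rw [DwordL_cons, DwordL_cons, PhiWord, hd1_cons,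
        wordOf_cons a t, mul_add, mul_add, mul_smul_comm, mul_smul_comm]
      module

noncomputable def Phi (α β a : Letter) : Az →ₗ[ℤ] Az :=
  (Finsupp.lsum ℤ fun w => LinearMap.toSpanSingleton ℤ Az (PhiWord α β a (FreeMonoid.toList w))) ∘ₗ (MonoidAlgebra.coeffLinearEquiv ℤ).toLinearMap

lemma lsum_wordOf {M : Type*} [AddCommGroup M] (F : FreeMonoid Letter → M)
    (l : List Letter) :
    ((Finsupp.lsum ℤ fun w => LinearMap.toSpanSingleton ℤ M (F w)) ∘ₗ (MonoidAlgebra.coeffLinearEquiv ℤ).toLinearMap) (wordOf l)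
      = F (FreeMonoid.ofList l) := by
  rw [LinearMap.comp_apply, LinearEquiv.coe_toLinearMap, MonoidAlgebra.coeffLinearEquiv_apply,
    wordOf, MonoidAlgebra.coeff_single, Finsupp.lsum_single, LinearMap.toSpanSingleton_apply_one]

lemma Phi_wordOf (α β a : Letter) (l : List Letter) : Phi α β a (wordOf l) = PhiWord α β a l := by
  have h := lsum_wordOf (fun w => PhiWord α β a (FreeMonoid.toList w)) l
  rw [FreeMonoid.toList_ofList] at h
  exact h

lemma sh_wordOf (u v : List Letter) : sh (wordOf u) (wordOf v) = shuffleWord u v := by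
  have h1 : sh (wordOf u) = (Finsupp.lsum ℤ fun v => LinearMap.toSpanSingleton ℤ Az
      (shuffleWord (FreeMonoid.toList (FreeMonoid.ofList u)) (FreeMonoid.toList v))) ∘ₗ (MonoidAlgebra.coeffLinearEquiv ℤ).toLinearMap :=
    lsum_wordOf _ u
  rw [h1]
  simpa using lsum_wordOf
    (fun v => shuffleWord (FreeMonoid.toList (FreeMonoid.ofList u)) (FreeMonoid.toList v)) v

lemma Az.myinduction {p : Az → Prop} (h0 : p 0) (hs : ∀ (r : ℤ) (l : List Letter), p (r • wordOf l))
    (ha : ∀ x y, p x → p y → p (x + y)) (x : Az) : p x := by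
  induction x using MonoidAlgebra.induction_linear with
  | zero => exact h0
  | add a b pa pb => exact ha _ _ pa pb
  | single a b => simpa [wordOf, MonoidAlgebra.smul_single] using hs b (FreeMonoid.toList a)

lemma del_cons_op (α β a : Letter) (x : Az) :
    del α β (wordOf [a] * x) = wordOf [a] * del α β x + Phi α β a x := by
  induction x using Az.myinduction with
  | h0 => simp
  | ha x y px py =>
      rw [mul_add, map_add, map_add, map_add, mul_add, px, py]
      abel
  | hs r l =>
      rw [mul_smul_comm, map_smul, map_smul, map_smul, ← wordOf_cons, del_wordOf, del_wordOf,
        Phi_wordOf, Dword_cons, smul_add, mul_smul_comm]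

lemma Phi_cons_op (α β a p : Letter) (x : Az) :
    Phi α β a (wordOf [p] * x)
      = (dd α β a p - dd α β 0 a) • (wordOf [p] * x) + (dd α β 0 p - dd α β a p) • (wordOf [a] * x) := by
  induction x using Az.myinduction with
  | h0 => simp
  | ha x y px py =>
      simp only [mul_add, map_add, px, py, smul_add]
      abel
  | hs r l =>
      rw [mul_smul_comm, map_smul, ← wordOf_cons, Phi_wordOf, PhiWord]
      simp only [mul_smul_comm]
      rw [← wordOf_cons a l]
      module

lemma sh_zero_left (y : Az) : sh 0 y = 0 := by rw [map_zero]; rfl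

lemma sh_one_left (y : Az) : sh 1 y = y := by
  induction y using Az.myinduction with
  | h0 => simp
  | ha x y px py => rw [map_add, px, py]
  | hs r l => rw [map_smul, ← wordOf_nil, sh_wordOf, shuffleWord]

lemma shuffleWord_nil_right (u : List Letter) : shuffleWord u [] = wordOf u := by
  cases u <;> simp [shuffleWord]

lemma sh_one_right (x : Az) : sh x 1 = x := by
  induction x using Az.myinduction with
  | h0 => simp
  | ha x y px py => rw [map_add, LinearMap.add_apply, px, py]
  | hs r l =>
      rw [map_smul, LinearMap.smul_apply, ← wordOf_nil, sh_wordOf, shuffleWord_nil_right]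

lemma sh_rec_word (a b : Letter) (l : List Letter) (y : Az) :
    sh (wordOf (a :: l)) (wordOf [b] * y)
      = wordOf [a] * sh (wordOf l) (wordOf [b] * y) + wordOf [b] * sh (wordOf (a :: l)) y := by
  induction y using Az.myinduction with
  | h0 => simp
  | ha x y px py =>
      rw [mul_add, map_add, map_add, map_add, px, py, mul_add, mul_add]
      abel
  | hs r l' =>
      rw [mul_smul_comm, map_smul, map_smul, map_smul, ← wordOf_cons, sh_wordOf, sh_wordOf,
        sh_wordOf, shuffleWord, smul_add, mul_smul_comm, mul_smul_comm]

lemma sh_rec (a b : Letter) (x y : Az) :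
    sh (wordOf [a] * x) (wordOf [b] * y)
      = wordOf [a] * sh x (wordOf [b] * y) + wordOf [b] * sh (wordOf [a] * x) y := by
  induction x using Az.myinduction with
  | h0 => simp
  | ha x x' px px' =>
      simp only [mul_add, map_add, LinearMap.add_apply, px, px']
      abel
  | hs r l =>
      simp only [mul_smul_comm, map_smul, LinearMap.smul_apply, ← wordOf_cons]
      rw [sh_rec_word]
      module

lemma shuffleWord_nil_left (v : List Letter) : shuffleWord [] v = wordOf v := by
  rw [shuffleWord]

lemma shuffleWord_cons_cons (a b : Letter) (u v : List Letter) :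
    shuffleWord (a :: u) (b :: v)
      = wordOf [a] * shuffleWord u (b :: v) + wordOf [b] * shuffleWord (a :: u) v := by
  rw [shuffleWord]

lemma Dword_nil (α β : Letter) : Dword α β [] = 0 := by simp [Dword]

lemma lemA (α β a b : Letter) (u' v' : List Letter) :
    Phi α β a (shuffleWord u' (b :: v')) + wordOf [b] * sh (PhiWord α β a u') (wordOf v')
      - sh (PhiWord α β a u') (wordOf (b :: v'))
      = (dd α β a b - dd α β 0 a) • (wordOf [b] * shuffleWord u' v')
        + (dd α β 0 b - dd α β a b) • (wordOf [a] * shuffleWord u' v') := by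
  cases u' with
  | nil =>
      rw [shuffleWord_nil_left, shuffleWord_nil_left, Phi_wordOf]
      simp only [PhiWord]
      simp only [map_smul, LinearMap.smul_apply, sh_one_left, ← wordOf_nil]
      rw [sh_wordOf, sh_wordOf, shuffleWord_nil_left, shuffleWord_nil_left,
        wordOf_cons b v', wordOf_cons a v']
      simp only [mul_smul_comm]
      module
  | cons p u'' =>
      rw [shuffleWord_cons_cons p b u'' v', map_add, Phi_cons_op, Phi_cons_op]
      simp only [PhiWord]
      simp only [map_add, map_smul, LinearMap.add_apply, LinearMap.smul_apply, sh_wordOf]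
      rw [shuffleWord_cons_cons p b u'' v', shuffleWord_cons_cons a b u'' v']
      simp only [mul_add, smul_add, mul_smul_comm]
      module

lemma lemB (α β a b : Letter) (u' v' : List Letter) :
    Phi α β b (shuffleWord (a :: u') v') + wordOf [a] * sh (wordOf u') (PhiWord α β b v')
      - sh (wordOf (a :: u')) (PhiWord α β b v')
      = (dd α β b a - dd α β 0 b) • (wordOf [a] * shuffleWord u' v')
        + (dd α β 0 a - dd α β b a) • (wordOf [b] * shuffleWord u' v') := by
  cases v' with
  | nil =>
      rw [shuffleWord_nil_right, shuffleWord_nil_right, Phi_wordOf]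
      simp only [PhiWord]
      simp only [map_smul, LinearMap.smul_apply, ← wordOf_nil, sh_wordOf]
      rw [shuffleWord_nil_right, shuffleWord_nil_right,
        wordOf_cons a u', wordOf_cons b u']
      simp only [mul_smul_comm]
      module
  | cons q v'' =>
      rw [shuffleWord_cons_cons a q u' v'', map_add, Phi_cons_op, Phi_cons_op]
      simp only [PhiWord]
      simp only [map_add, map_smul, LinearMap.add_apply, LinearMap.smul_apply, sh_wordOf]
      rw [shuffleWord_cons_cons a q u' v'', shuffleWord_cons_cons a b u' v'']
      simp only [mul_add, smul_add, mul_smul_comm]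
      module

lemma key (α β : Letter) : ∀ (u v : List Letter),
    del α β (shuffleWord u v) = sh (Dword α β u) (wordOf v) + sh (wordOf u) (Dword α β v)
  | [], v => by
      rw [shuffleWord_nil_left, del_wordOf, Dword_nil, wordOf_nil, sh_one_left]
      simp
  | a :: u', [] => by
      rw [shuffleWord_nil_right, del_wordOf, Dword_nil, wordOf_nil, sh_one_right]
      simp
  | a :: u', b :: v' => by
      have ih1 := key α β u' (b :: v')
      have ih2 := key α β (a :: u') v'
      have hA := lemA α β a b u' v'
      have hB := lemB α β a b u' v'
      rw [dd_comm α β b a] at hB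
      rw [shuffleWord_cons_cons, map_add, del_cons_op, del_cons_op, ih1, ih2,
        Dword_cons α β a u', Dword_cons α β b v']
      simp only [map_add, LinearMap.add_apply, mul_add]
      rw [wordOf_cons b v'] at hA ⊢
      rw [sh_rec]
      rw [wordOf_cons a u'] at hB ⊢
      rw [sh_rec]
      linear_combination (norm := module) hA + hB
termination_by u v => u.length + v.length

end Aux

/-- For `c ∈ {0,1}`, `∂_{z,c}` is a derivation for the shuffle product. -/
theorem stmt_3 (c : Letter) (hc : c = 0 ∨ c = 1) (u v : Az) :
    del 2 c (sh u v) = sh (del 2 c u) v + sh u (del 2 c v) := by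
  induction u using Az.myinduction with
  | h0 => simp
  | ha x y px py =>
      simp only [map_add, LinearMap.add_apply, px, py]
      abel
  | hs r l =>
      induction v using Az.myinduction with
      | h0 => simp
      | ha x y px py =>
          simp only [map_add, px, py]
          abel
      | hs s m =>
          simp only [map_smul, LinearMap.smul_apply]
          rw [sh_wordOf, del_wordOf, del_wordOf, key 2 c l m]
          simp only [map_add, smul_add, map_smul, sh_wordOf, LinearMap.smul_apply]
end

section
/- The duality map τ_z preserves A_z^0: τ_z(A_z^0) ⊆ A_z^0. -/
open scoped BigOperators

lemma my_wordOf_append (m v : List Letter) : wordOf (m ++ v) = wordOf m * wordOf v := by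
  simp [wordOf, MonoidAlgebra.single_mul_single]

lemma my_wordOf_nil : wordOf [] = (1 : Az) := by
  simp [wordOf]; rfl

def mySset (l : List Letter) : Set Az :=
  {x | ∃ m : List Letter, m.length = l.length ∧
    (l.head? ≠ some 0 → m.getLast? ≠ some 1) ∧
    (l.getLast? ≠ some 1 → m.head? ≠ some 0) ∧ x = wordOf m}

lemma my_tauWord_mem (l : List Letter) : tauWord l ∈ Submodule.span ℤ (mySset l) := by
  induction l with
  | nil =>
      apply Submodule.subset_span
      exact ⟨[], by simp [tauWord, my_wordOf_nil, mySset]⟩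
  | cons a u ih =>
      show tauWord u * tauLetter a ∈ _
      refine Submodule.span_induction (p := fun x _ => x * tauLetter a ∈
        Submodule.span ℤ (mySset (a :: u))) ?_ (by simp) ?_ ?_ ih
      · rintro x ⟨m, hlen, h1, h2, rfl⟩
        have key : ∀ b : Letter, (a ≠ 0 → b ≠ 1) → (a ≠ 1 → b ≠ 0) →
            wordOf (m ++ [b]) ∈ Submodule.span ℤ (mySset (a :: u)) := by
          intro b hb1 hb2
          apply Submodule.subset_span
          refine ⟨m ++ [b], by simp [hlen], ?_, ?_, rfl⟩
          · intro ha
            simp only [List.head?_cons, ne_eq, Option.some.injEq] at ha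
            simp [List.getLast?_concat]
            exact hb1 ha
          · intro hl
            rcases m with _ | ⟨c, m'⟩
            · have hu : u = [] := by simpa using hlen.symm
              subst hu
              simp at hl
              simpa using hb2 hl
            · have hu : u ≠ [] := by
                intro h; subst h; simp at hlen
              have : (a :: u).getLast? = u.getLast? := by
                rcases u with _ | ⟨d, u'⟩
                · exact absurd rfl hu
                · simp [List.getLast?_cons_cons]
              rw [this] at hl
              simpa using h2 hl
        have e0 : tauLetter 0 = wordOf [2] - wordOf [1] := by simp [tauLetter]
        have e1 : tauLetter 1 = wordOf [2] - wordOf [0] := by simp [tauLetter]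
        have e2 : tauLetter 2 = wordOf [2] := by simp [tauLetter]
        fin_cases a
        · show wordOf m * tauLetter 0 ∈ Submodule.span ℤ (mySset ((0:Letter) :: u))
          rw [e0, mul_sub, ← my_wordOf_append, ← my_wordOf_append]
          exact sub_mem (key 2 (by simp) (by decide))
            (key 1 (by decide) (by decide))
        · show wordOf m * tauLetter 1 ∈ Submodule.span ℤ (mySset ((1:Letter) :: u))
          rw [e1, mul_sub, ← my_wordOf_append, ← my_wordOf_append]
          exact sub_mem (key 2 (by decide) (by simp))
            (key 0 (by decide) (by decide))
        · show wordOf m * tauLetter 2 ∈ Submodule.span ℤ (mySset ((2:Letter) :: u))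
          rw [e2, ← my_wordOf_append]
          exact key 2 (by decide) (by decide)
      · intro x y _ _ hx hy
        rw [add_mul]; exact add_mem hx hy
      · intro c x _ hx
        rw [smul_mul_assoc]; exact Submodule.smul_mem _ _ hx

lemma my_tau_wordOf (l : List Letter) : tau (wordOf l) = tauWord l := by
  rw [tau, wordOf, LinearMap.comp_apply]
  change (Finsupp.lsum ℤ _) (Finsupp.single (FreeMonoid.ofList l) (1:ℤ)) = _
  erw [Finsupp.lsum_single]
  simp

/-- The duality map `τ_z` preserves `𝒜_z^0`. -/
theorem stmt_6 (u : Az) (hu : u ∈ Az0) : tau u ∈ Az0 := by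
  refine Submodule.span_induction ?_ (by simp) ?_ ?_ hu
  · rintro x ⟨l, hl, rfl⟩
    rw [my_tau_wordOf]
    refine Submodule.span_le.mpr ?_ (my_tauWord_mem l)
    rintro y ⟨m, hlen, h1, h2, rfl⟩
    apply Submodule.subset_span
    rcases hl with rfl | ⟨hh, ht⟩
    · exact ⟨m, Or.inl (List.length_eq_zero_iff.mp hlen), rfl⟩
    · exact ⟨m, Or.inr ⟨h2 ht, h1 hh⟩, rfl⟩
  · intro x y _ _ hx hy
    rw [map_add]; exact add_mem hx hy
  · intro c x _ hx
    rw [map_smul]; exact Submodule.smul_mem _ _ hx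
end

section
/- The linear map A_z^{−2} ⊗ Z⟨e_z⟩ → A_z^{−1} given by u ⊗ v ↦ u ⧢ v is a bijection, where A_z^{−1} := A_z^{−2}·Z⟨e_z⟩ (concatenation span). -/
open scoped BigOperators

namespace Stmt11

/-- `rep k = e_z^k` as a list. -/
abbrev rep (k : ℕ) : List Letter := List.replicate k 2

/-- Condition for a word to be an `𝒜_z^{-2}` generator. -/
def cond (l : List Letter) : Prop :=
  l = [] ∨ (l.head? ≠ some 0 ∧ l.getLast? = some 0)

instance : DecidablePred cond := fun l => by unfold cond; infer_instance

lemma wordOf_single (l : List Letter) :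
    MonoidAlgebra.coeffLinearEquiv ℤ (wordOf l) = Finsupp.single (FreeMonoid.ofList l) (1:ℤ) := rfl

lemma wordOf_mul (a : Letter) (l : List Letter) :
    wordOf [a] * wordOf l = wordOf (a :: l) := by
  unfold wordOf
  rw [MonoidAlgebra.single_mul_single, one_mul]
  rfl

lemma sh_wordOf (u v : List Letter) : sh (wordOf u) (wordOf v) = shuffleWord u v := by
  unfold sh
  simp only [LinearMap.comp_apply, LinearEquiv.coe_coe, wordOf_single]
  erw [Finsupp.lsum_single]
  rw [LinearMap.toSpanSingleton_apply, one_smul]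
  simp only [LinearMap.comp_apply, LinearEquiv.coe_coe, wordOf_single]
  erw [Finsupp.lsum_single]
  rw [LinearMap.toSpanSingleton_apply, one_smul]
  rfl

lemma shuffleWord_nil_right (l : List Letter) : shuffleWord l [] = wordOf l := by
  cases l <;> simp [shuffleWord]

lemma shuffleWord_nil_left (l : List Letter) : shuffleWord [] l = wordOf l := by
  cases l <;> simp [shuffleWord]

/-- Span of error terms appearing in `l ⧢ z^k`, with head tracked. -/
noncomputable def Err (h : Option Letter) (k : ℕ) : Submodule ℤ Az :=
  Submodule.span ℤ {x | ∃ l j, j < k ∧ l ≠ [] ∧ l.getLast? = some 0 ∧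
    (l.head? = h ∨ l.head? = some 2) ∧ x = wordOf (l ++ rep j)}

lemma gen_mem_Err {h : Option Letter} {k : ℕ} {l : List Letter} {j : ℕ}
    (hj : j < k) (hne : l ≠ []) (hlast : l.getLast? = some 0)
    (hhead : l.head? = h ∨ l.head? = some 2) :
    wordOf (l ++ rep j) ∈ Err h k :=
  Submodule.subset_span ⟨l, j, hj, hne, hlast, hhead, rfl⟩

lemma mul_single_mem {S : Set Az} {T : Submodule ℤ Az} (a : Letter)
    (hgen : ∀ x ∈ S, wordOf [a] * x ∈ T) {x : Az} (hx : x ∈ Submodule.span ℤ S) :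
    wordOf [a] * x ∈ T := by
  induction hx using Submodule.span_induction with
  | mem x h => exact hgen x h
  | zero => simpa using T.zero_mem
  | add x y _ _ hx hy => rw [mul_add]; exact T.add_mem hx hy
  | smul c x _ hx => rw [mul_smul_comm]; exact T.smul_mem c hx

lemma prepend2_mem_Err {h h' : Option Letter} {k : ℕ} {x : Az} (hx : x ∈ Err h k) :
    wordOf [2] * x ∈ Err h' (k + 1) := by
  refine mul_single_mem 2 (fun y hy => ?_) hx
  obtain ⟨l, j, hj, hne, hlast, _, rfl⟩ := hy
  obtain ⟨c, t, rfl⟩ := List.exists_cons_of_ne_nil hne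
  rw [wordOf_mul]
  show wordOf ((2 :: c :: t) ++ rep j) ∈ _
  exact gen_mem_Err (l := 2 :: c :: t) (j := j) (by omega) (by simp)
    (by rw [List.getLast?_cons_cons]; exact hlast) (Or.inr rfl)

lemma prependa_mem_Err {h : Option Letter} {k : ℕ} (a : Letter) {x : Az}
    (hx : x ∈ Err h k) : wordOf [a] * x ∈ Err (some a) k := by
  refine mul_single_mem a (fun y hy => ?_) hx
  obtain ⟨l, j, hj, hne, hlast, _, rfl⟩ := hy
  obtain ⟨c, t, rfl⟩ := List.exists_cons_of_ne_nil hne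
  rw [wordOf_mul]
  show wordOf ((a :: c :: t) ++ rep j) ∈ _
  exact gen_mem_Err (l := a :: c :: t) (j := j) hj (by simp)
    (by rw [List.getLast?_cons_cons]; exact hlast) (Or.inl rfl)

end Stmt11
namespace Stmt11

lemma shuffle_cons (a b : Letter) (u v : List Letter) :
    shuffleWord (a :: u) (b :: v)
      = wordOf [a] * shuffleWord u (b :: v) + wordOf [b] * shuffleWord (a :: u) v := by
  rw [shuffleWord]

lemma shuffle_err : ∀ (n : ℕ) (l : List Letter) (k : ℕ), l.length + k ≤ n → l ≠ [] →
    l.getLast? = some 0 →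
    shuffleWord l (rep k) - wordOf (l ++ rep k) ∈ Err l.head? k := by
  intro n
  induction n with
  | zero =>
    intro l k hn hne _
    obtain ⟨a, u, rfl⟩ := List.exists_cons_of_ne_nil hne
    simp at hn
  | succ n ih =>
    intro l k hn hne hlast
    obtain ⟨a, u, rfl⟩ := List.exists_cons_of_ne_nil hne
    cases k with
    | zero =>
      rw [show rep 0 = [] from rfl, shuffleWord_nil_right, List.append_nil, sub_self]
      exact Submodule.zero_mem _
    | succ j =>
      rw [show rep (j+1) = 2 :: rep j from rfl, shuffle_cons]
      cases u with
      | nil =>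
        have ha : a = 0 := by simpa using hlast
        have hih := ih [a] j (by simp at hn ⊢; omega) (by simp) (by simpa using hlast)
        set dB := shuffleWord [a] (rep j) - wordOf ([a] ++ rep j) with hdB
        have h2 : shuffleWord [a] (rep j) = dB + wordOf ([a] ++ rep j) := by
          rw [hdB, sub_add_cancel]
        have expand : wordOf [a] * shuffleWord [] (2 :: rep j)
              + wordOf [2] * shuffleWord [a] (rep j) - wordOf ([a] ++ 2 :: rep j)
            = wordOf [2] * dB + wordOf [2] * wordOf ([a] ++ rep j) := by
          rw [h2, mul_add, shuffleWord_nil_left, wordOf_mul]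
          have : wordOf (a :: 2 :: rep j) = wordOf ([a] ++ 2 :: rep j) := rfl
          rw [this]
          abel
        rw [expand]
        refine Submodule.add_mem _ (prepend2_mem_Err hih) ?_
        rw [wordOf_mul]
        show wordOf ((2 :: [a]) ++ rep j) ∈ _
        exact gen_mem_Err (l := 2 :: [a]) (by omega) (by simp)
          (by simpa using hlast) (Or.inr rfl)
      | cons b u' =>
        have hlast' : (b :: u').getLast? = some 0 := by
          rwa [List.getLast?_cons_cons] at hlast
        have hih1 := ih (b :: u') (j+1) (by simp at hn ⊢; omega) (by simp) hlast'
        have hih2 := ih (a :: b :: u') j (by simp at hn ⊢; omega) (by simp)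
          (by rwa [List.getLast?_cons_cons])
        set dA := shuffleWord (b :: u') (rep (j+1)) - wordOf ((b :: u') ++ rep (j+1)) with hdA
        set dB := shuffleWord (a :: b :: u') (rep j)
          - wordOf ((a :: b :: u') ++ rep j) with hdB
        have h1 : shuffleWord (b :: u') (2 :: rep j) = dA + wordOf ((b :: u') ++ rep (j+1)) := by
          rw [hdA, sub_add_cancel]; rfl
        have h2 : shuffleWord (a :: b :: u') (rep j) = dB + wordOf ((a :: b :: u') ++ rep j) := by
          rw [hdB, sub_add_cancel]
        have expand : wordOf [a] * shuffleWord (b :: u') (2 :: rep j)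
              + wordOf [2] * shuffleWord (a :: b :: u') (rep j)
              - wordOf ((a :: b :: u') ++ 2 :: rep j)
            = wordOf [a] * dA
              + (wordOf [2] * dB + wordOf [2] * wordOf ((a :: b :: u') ++ rep j)) := by
          rw [h1, h2, mul_add, mul_add, wordOf_mul]
          have : wordOf (a :: ((b :: u') ++ rep (j+1)))
              = wordOf ((a :: b :: u') ++ 2 :: rep j) := rfl
          rw [this]
          abel
        rw [expand]
        refine Submodule.add_mem _ (prependa_mem_Err a hih1)
          (Submodule.add_mem _ (prepend2_mem_Err hih2) ?_)
        rw [wordOf_mul]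
        show wordOf ((2 :: a :: b :: u') ++ rep j) ∈ _
        exact gen_mem_Err (l := 2 :: a :: b :: u') (by omega) (by simp)
          (by rw [List.getLast?_cons_cons, List.getLast?_cons_cons]; exact hlast') (Or.inr rfl)

/-- Span of `𝒜_z^{-1}`-generator words with fewer than `k` trailing `z`'s. -/
noncomputable def Slt (k : ℕ) : Submodule ℤ Az :=
  Submodule.span ℤ {x | ∃ l j, j < k ∧ cond l ∧ x = wordOf (l ++ rep j)}

lemma Slt_mono {j k : ℕ} (h : j ≤ k) : Slt j ≤ Slt k :=
  Submodule.span_mono (by rintro x ⟨l, i, hi, hc, rfl⟩; exact ⟨l, i, by omega, hc, rfl⟩)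

/-- The error term of `l ⧢ z^k`. -/
noncomputable def errE (l : List Letter) (k : ℕ) : Az :=
  sh (wordOf l) (wordOf (rep k)) - wordOf (l ++ rep k)

lemma errE_mem {l : List Letter} {k : ℕ} (h : cond l) : errE l k ∈ Slt k := by
  unfold errE
  rw [sh_wordOf]
  rcases h with rfl | ⟨hh, hl⟩
  · rw [shuffleWord_nil_left, List.nil_append, sub_self]
    exact Submodule.zero_mem _
  · have hne : l ≠ [] := by rintro rfl; simp at hl
    have hmem := shuffle_err (l.length + k) l k le_rfl hne hl
    refine Submodule.span_le.mpr ?_ hmem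
    rintro x ⟨l', j, hj, hne', hlast', hhead', rfl⟩
    refine Submodule.subset_span ⟨l', j, hj, Or.inr ⟨?_, hlast'⟩, rfl⟩
    rcases hhead' with h' | h'
    · rw [h']; exact hh
    · rw [h']; simp

end Stmt11
namespace Stmt11

/-- Number of trailing `z`'s. -/
def tz (w : List Letter) : ℕ := (w.reverse.takeWhile fun a => a == 2).length

/-- The word with trailing `z`'s removed. -/
def sz (w : List Letter) : List Letter := (w.reverse.dropWhile fun a => a == 2).reverse

lemma cond_getLast_ne {l : List Letter} (h : cond l) : l.getLast? ≠ some 2 := by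
  rcases h with rfl | ⟨_, h2⟩
  · simp
  · rw [h2]
    intro hc
    exact absurd (Option.some_injective _ hc) (by decide)

lemma take_drop_rev {l : List Letter} (h : l.getLast? ≠ some 2) :
    (l.reverse.takeWhile fun a => a == 2) = []
      ∧ (l.reverse.dropWhile fun a => a == 2) = l.reverse := by
  cases hrl : l.reverse with
  | nil => simp
  | cons c t =>
    have hc : c ≠ 2 := by
      have hh := List.head?_reverse (l := l)
      rw [hrl] at hh
      intro hc
      rw [hc] at hh
      exact h hh.symm
    constructor
    · rw [List.takeWhile_cons]
      simp [hc]
    · rw [List.dropWhile_cons]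
      simp [hc]

lemma sz_append {l : List Letter} (h : l.getLast? ≠ some 2) (j : ℕ) :
    sz (l ++ rep j) = l := by
  unfold sz
  rw [List.reverse_append, List.reverse_replicate, List.dropWhile_append]
  have h1 : (List.dropWhile (fun a => a == 2) (rep j)) = [] := by
    rw [show (rep j : List Letter) = List.replicate j 2 from rfl, List.dropWhile_replicate]
    simp
  rw [h1, (take_drop_rev h).2]
  simp

lemma tz_append {l : List Letter} (h : l.getLast? ≠ some 2) (j : ℕ) :
    tz (l ++ rep j) = j := by
  unfold tz
  rw [List.reverse_append, List.reverse_replicate, List.takeWhile_append]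
  have h1 : (List.takeWhile (fun a => a == 2) (rep j)) = rep j := by
    rw [show (rep j : List Letter) = List.replicate j 2 from rfl, List.takeWhile_replicate]
    simp
  rw [h1]
  simp [(take_drop_rev h).1]

lemma mem_Azm2 {l : List Letter} (h : cond l) : wordOf l ∈ Azm2 :=
  Submodule.subset_span ⟨l, h, rfl⟩

lemma mem_Zez (k : ℕ) : wordOf (rep k) ∈ Zez :=
  Submodule.subset_span ⟨k, rfl⟩

lemma mem_Azm1 {l : List Letter} (h : cond l) (k : ℕ) : wordOf (l ++ rep k) ∈ Azm1 :=
  Submodule.subset_span ⟨l, k, h, rfl⟩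

lemma Slt_le_Azm1 (k : ℕ) : Slt k ≤ Azm1 :=
  Submodule.span_le.mpr (by rintro x ⟨l, j, _, hc, rfl⟩; exact mem_Azm1 hc j)

/-- The lift of the shuffle map. -/
noncomputable def LM : TensorProduct ℤ ↥Azm2 ↥Zez →ₗ[ℤ] Az :=
  TensorProduct.lift ((sh.comp Azm2.subtype).compl₂ Zez.subtype)

lemma LM_tmul (x : ↥Azm2) (y : ↥Zez) : LM (x ⊗ₜ[ℤ] y) = sh x.1 y.1 := by
  simp [LM, TensorProduct.lift.tmul]
  exact TensorProduct.lift.tmul _ _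

end Stmt11
namespace Stmt11

set_option maxHeartbeats 1000000
set_option synthInstance.maxHeartbeats 400000

lemma sh_split (l : List Letter) (j : ℕ) :
    sh (wordOf l) (wordOf (rep j)) = wordOf (l ++ rep j) + errE l j := by
  unfold errE
  rw [add_sub_cancel]

lemma exists_G (k : ℕ) : ∃ G : Az →ₗ[ℤ] TensorProduct ℤ ↥Azm2 ↥Zez,
    ∀ (l : List Letter) (j : ℕ) (h : cond l), j ≤ k →
      G (sh (wordOf l) (wordOf (rep j)))
        = (⟨wordOf l, mem_Azm2 h⟩ : ↥Azm2) ⊗ₜ[ℤ] (⟨wordOf (rep j), mem_Zez j⟩ : ↥Zez) := by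
  induction k with
  | zero =>
    refine ⟨(Finsupp.lsum ℤ fun w => LinearMap.toSpanSingleton ℤ _
      (if h : cond (FreeMonoid.toList w)
        then ((⟨wordOf (FreeMonoid.toList w), mem_Azm2 h⟩ : ↥Azm2)
          ⊗ₜ[ℤ] (⟨wordOf (rep 0), mem_Zez 0⟩ : ↥Zez))
        else 0)) ∘ₗ (MonoidAlgebra.coeffLinearEquiv ℤ).toLinearMap, ?_⟩
    intro l j h hj
    have hj0 : j = 0 := by omega
    subst hj0
    have hsh : sh (wordOf l) (wordOf (rep 0)) = wordOf l := by
      rw [sh_wordOf, show (rep 0 : List Letter) = [] from rfl, shuffleWord_nil_right]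
    rw [hsh]
    simp only [LinearMap.comp_apply, LinearEquiv.coe_coe, wordOf_single]
    erw [Finsupp.lsum_single]
    rw [LinearMap.toSpanSingleton_apply, one_smul]
    exact dif_pos h
  | succ k ihk =>
    obtain ⟨G, hG⟩ := ihk
    refine ⟨(Finsupp.lsum ℤ fun w => LinearMap.toSpanSingleton ℤ _
      (if h : cond (sz (FreeMonoid.toList w)) ∧ tz (FreeMonoid.toList w) = k + 1
        then ((⟨wordOf (sz (FreeMonoid.toList w)), mem_Azm2 h.1⟩ : ↥Azm2)
            ⊗ₜ[ℤ] (⟨wordOf (rep (k+1)), mem_Zez (k+1)⟩ : ↥Zez))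
          - G (errE (sz (FreeMonoid.toList w)) (k+1))
        else G (wordOf (FreeMonoid.toList w)))) ∘ₗ (MonoidAlgebra.coeffLinearEquiv ℤ).toLinearMap, ?_⟩
    set G' : Az →ₗ[ℤ] TensorProduct ℤ ↥Azm2 ↥Zez := (Finsupp.lsum ℤ fun w =>
      LinearMap.toSpanSingleton ℤ _
      (if h : cond (sz (FreeMonoid.toList w)) ∧ tz (FreeMonoid.toList w) = k + 1
        then ((⟨wordOf (sz (FreeMonoid.toList w)), mem_Azm2 h.1⟩ : ↥Azm2)
            ⊗ₜ[ℤ] (⟨wordOf (rep (k+1)), mem_Zez (k+1)⟩ : ↥Zez))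
          - G (errE (sz (FreeMonoid.toList w)) (k+1))
        else G (wordOf (FreeMonoid.toList w)))) ∘ₗ (MonoidAlgebra.coeffLinearEquiv ℤ).toLinearMap with hGdef
    have hval : ∀ w : List Letter, G' (wordOf w) =
        if h : cond (sz w) ∧ tz w = k + 1
        then ((⟨wordOf (sz w), mem_Azm2 h.1⟩ : ↥Azm2)
            ⊗ₜ[ℤ] (⟨wordOf (rep (k+1)), mem_Zez (k+1)⟩ : ↥Zez))
          - G (errE (sz w) (k+1))
        else G (wordOf w) := by
      intro w
      rw [hGdef]
      simp only [LinearMap.comp_apply, LinearEquiv.coe_coe, wordOf_single]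
      erw [Finsupp.lsum_single]
      rw [LinearMap.toSpanSingleton_apply, one_smul]
      rfl
    have agree : ∀ x ∈ Slt (k+1), G' x = G x := by
      intro x hx
      induction hx using Submodule.span_induction with
      | mem x hm =>
        obtain ⟨l, j, hj, hc, rfl⟩ := hm
        rw [hval]
        rw [dif_neg]
        rintro ⟨-, htz⟩
        rw [tz_append (cond_getLast_ne hc)] at htz
        omega
      | zero => simp
      | add x y _ _ hx hy => rw [map_add, map_add, hx, hy]
      | smul c x _ hx => rw [map_smul, map_smul, hx]
    intro l j h hj
    have herr : G' (errE l j) = G (errE l j) :=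
      agree _ (Slt_mono hj (errE_mem h))
    rw [sh_split, map_add, herr]
    rcases Nat.lt_or_ge j (k+1) with hlt | hge
    · -- j ≤ k : use the previous G
      have h1 : G' (wordOf (l ++ rep j)) = G (wordOf (l ++ rep j)) :=
        agree _ (Submodule.subset_span ⟨l, j, hlt, h, rfl⟩)
      rw [h1, ← map_add, ← sh_split, hG l j h (by omega)]
    · -- j = k+1 : new case
      have hjk : j = k + 1 := by omega
      subst hjk
      rw [hval]
      rw [dif_pos ⟨by rw [sz_append (cond_getLast_ne h)]; exact h,
        tz_append (cond_getLast_ne h) (k+1)⟩]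
      have hsz : sz (l ++ rep (k+1)) = l := sz_append (cond_getLast_ne h) (k+1)
      simp only [hsz]
      rw [sub_add_cancel]

end Stmt11
namespace Stmt11

set_option maxHeartbeats 1000000
set_option synthInstance.maxHeartbeats 400000

/-- Generating simple tensors. -/
def Tgen : Set (TensorProduct ℤ ↥Azm2 ↥Zez) :=
  {x | ∃ (l : List Letter) (j : ℕ) (h : cond l),
    x = (⟨wordOf l, mem_Azm2 h⟩ : ↥Azm2) ⊗ₜ[ℤ] (⟨wordOf (rep j), mem_Zez j⟩ : ↥Zez)}

lemma mem_Tspan (x : TensorProduct ℤ ↥Azm2 ↥Zez) : x ∈ Submodule.span ℤ Tgen := by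
  induction x using TensorProduct.induction_on with
  | zero => exact Submodule.zero_mem _
  | add x y hx hy => exact Submodule.add_mem _ hx hy
  | tmul a b =>
    obtain ⟨a, ha⟩ := a
    obtain ⟨b, hb⟩ := b
    induction ha using Submodule.span_induction with
    | mem a hm =>
      obtain ⟨l, hc, rfl⟩ := hm
      induction hb using Submodule.span_induction with
      | mem b hm' =>
        obtain ⟨j, rfl⟩ := hm'
        exact Submodule.subset_span ⟨l, j, hc, rfl⟩
      | zero =>
        have : ((⟨0, Submodule.zero_mem _⟩ : ↥Zez)) = 0 := rfl
        rw [this, TensorProduct.tmul_zero]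
        exact Submodule.zero_mem _
      | add b c hbm hcm ihb ihc =>
        have : ((⟨b + c, Submodule.add_mem _ hbm hcm⟩ : ↥Zez))
            = ⟨b, hbm⟩ + ⟨c, hcm⟩ := rfl
        rw [this, TensorProduct.tmul_add]
        exact Submodule.add_mem _ ihb ihc
      | smul r b hbm ihb =>
        have : ((⟨r • b, Submodule.smul_mem _ r hbm⟩ : ↥Zez)) = r • ⟨b, hbm⟩ := rfl
        rw [this, TensorProduct.tmul_smul]
        exact Submodule.smul_mem _ r ihb
    | zero =>
      have : ((⟨0, Submodule.zero_mem _⟩ : ↥Azm2)) = 0 := rfl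
      rw [this, TensorProduct.zero_tmul]
      exact Submodule.zero_mem _
    | add a c ham hcm iha ihc =>
      have : ((⟨a + c, Submodule.add_mem _ ham hcm⟩ : ↥Azm2))
          = ⟨a, ham⟩ + ⟨c, hcm⟩ := rfl
      rw [this, TensorProduct.add_tmul]
      exact Submodule.add_mem _ iha ihc
    | smul r a ham iha =>
      have : ((⟨r • a, Submodule.smul_mem _ r ham⟩ : ↥Azm2)) = r • ⟨a, ham⟩ := rfl
      rw [this, ← TensorProduct.smul_tmul']
      exact Submodule.smul_mem _ r iha

/-- Bounded generating tensors. -/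
noncomputable def Mk (k : ℕ) : Submodule ℤ (TensorProduct ℤ ↥Azm2 ↥Zez) :=
  Submodule.span ℤ {x | ∃ (l : List Letter) (j : ℕ) (h : cond l), j ≤ k ∧
    x = (⟨wordOf l, mem_Azm2 h⟩ : ↥Azm2) ⊗ₜ[ℤ] (⟨wordOf (rep j), mem_Zez j⟩ : ↥Zez)}

lemma Mk_mono {j k : ℕ} (h : j ≤ k) : Mk j ≤ Mk k :=
  Submodule.span_mono (by rintro x ⟨l, i, hc, hi, rfl⟩; exact ⟨l, i, hc, by omega, rfl⟩)

lemma exists_Mk (x : TensorProduct ℤ ↥Azm2 ↥Zez) : ∃ k, x ∈ Mk k := by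
  have hx := mem_Tspan x
  induction hx using Submodule.span_induction with
  | mem x hm =>
    obtain ⟨l, j, h, rfl⟩ := hm
    exact ⟨j, Submodule.subset_span ⟨l, j, h, le_rfl, rfl⟩⟩
  | zero => exact ⟨0, Submodule.zero_mem _⟩
  | add x y _ _ hx hy =>
    obtain ⟨k1, h1⟩ := hx
    obtain ⟨k2, h2⟩ := hy
    exact ⟨max k1 k2, Submodule.add_mem _ (Mk_mono (le_max_left _ _) h1)
      (Mk_mono (le_max_right _ _) h2)⟩
  | smul c x _ hx =>
    obtain ⟨k, h1⟩ := hx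
    exact ⟨k, Submodule.smul_mem _ c h1⟩

lemma G_left_inv {k : ℕ} {G : Az →ₗ[ℤ] TensorProduct ℤ ↥Azm2 ↥Zez}
    (hG : ∀ (l : List Letter) (j : ℕ) (h : cond l), j ≤ k →
      G (sh (wordOf l) (wordOf (rep j)))
        = (⟨wordOf l, mem_Azm2 h⟩ : ↥Azm2) ⊗ₜ[ℤ] (⟨wordOf (rep j), mem_Zez j⟩ : ↥Zez)) :
    ∀ x ∈ Mk k, G (LM x) = x := by
  intro x hx
  induction hx using Submodule.span_induction with
  | mem x hm =>
    obtain ⟨l, j, h, hj, rfl⟩ := hm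
    rw [LM_tmul]
    exact hG l j h hj
  | zero => rw [map_zero, map_zero]
  | add x y _ _ hx hy => rw [map_add, map_add, hx, hy]
  | smul c x _ hx => rw [map_smul, map_smul, hx]

lemma LM_injective : Function.Injective LM := by
  intro x y hxy
  have hz : LM (x - y) = 0 := by rw [map_sub, hxy, sub_self]
  obtain ⟨k, hk⟩ := exists_Mk (x - y)
  obtain ⟨G, hG⟩ := exists_G k
  have h0 := G_left_inv hG _ hk
  rw [hz, map_zero] at h0
  exact sub_eq_zero.mp h0.symm

lemma gen_mem_range : ∀ (k : ℕ) (l : List Letter), cond l →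
    wordOf (l ++ rep k) ∈ LinearMap.range LM := by
  intro k
  induction k using Nat.strong_induction_on with
  | _ k ih =>
    intro l hc
    have h2 : errE l k ∈ LinearMap.range LM := by
      refine Submodule.span_le.mpr ?_ (errE_mem hc)
      rintro x ⟨l', j, hj, hc', rfl⟩
      exact ih j hj l' hc'
    have h3 : wordOf (l ++ rep k)
        = LM ((⟨wordOf l, mem_Azm2 hc⟩ : ↥Azm2)
          ⊗ₜ[ℤ] (⟨wordOf (rep k), mem_Zez k⟩ : ↥Zez)) - errE l k := by
      rw [LM_tmul, sh_split, add_sub_cancel_right]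
    rw [h3]
    exact Submodule.sub_mem _ ⟨_, rfl⟩ h2

lemma LM_range : LinearMap.range LM = Azm1 := by
  apply le_antisymm
  · rintro x ⟨y, rfl⟩
    have hy := mem_Tspan y
    induction hy using Submodule.span_induction with
    | mem y hm =>
      obtain ⟨l, j, h, rfl⟩ := hm
      rw [LM_tmul]
      show sh (wordOf l) (wordOf (rep j)) ∈ Azm1
      rw [sh_split]
      exact Submodule.add_mem _ (mem_Azm1 h j) (Slt_le_Azm1 j (errE_mem h))
    | zero => rw [map_zero]; exact Submodule.zero_mem _
    | add x y _ _ hx hy => rw [map_add]; exact Submodule.add_mem _ hx hy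
    | smul c x _ hx => rw [map_smul]; exact Submodule.smul_mem _ c hx
  · refine Submodule.span_le.mpr ?_
    rintro x ⟨l, k, hc, rfl⟩
    exact gen_mem_range k l hc

end Stmt11

/-- The shuffle map `𝒜_z^{-2} ⊗ ℤ⟨e_z⟩ → 𝒜_z^{-1}`, `u ⊗ v ↦ u ⧢ v`,
is a bijection onto `𝒜_z^{-1}`. -/
theorem stmt_11 :
    Function.Injective
      (TensorProduct.lift ((sh.comp Azm2.subtype).compl₂ Zez.subtype)) ∧
    LinearMap.range
      (TensorProduct.lift ((sh.comp Azm2.subtype).compl₂ Zez.subtype)) = Azm1 :=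
  ⟨Stmt11.LM_injective, Stmt11.LM_range⟩
end
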